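/- Let n ≥ k ≥ 1 and for j = 1,…,k set ℓ_j = n − j + 1. For each j let α_j ∈ ℂ, let x_j ∈ ℂ^n satisfy x_j(i) = 0 for every i > ℓ_j, set y_j = α_j e_{ℓ_j}, and define R_j = I_n + (x_j − e_{ℓ_j}) y_j^T. Then for every j ∈ {1,…,k}: R_1 R_2 ⋯ R_{j−1} x_j = x_j and y_j^T R_{j+1} ⋯ R_k = y_j^T (with empty products interpreted as the identity). -/

import Mathlib

open Matrix

noncomputable section

/-- The factor `R_j = I + (x_j − e_ℓ) y_jᵀ` of the Gaussian factorization, with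
`y_j = α_j e_ℓ` and spike column `ℓ = n − j` (1-based `ℓ = n − j + 1`; here `t` is the
0-based index of the factor, so the spike column is `n − 1 − t`, 0-based). -/
def gaussFactor (n k : ℕ) (hn : 0 < n) (α : Fin k → ℂ) (x : Fin k → Fin n → ℂ)
    (t : Fin k) : Matrix (Fin n) (Fin n) ℂ :=
  1 + vecMulVec (x t - (Pi.single (⟨n - 1 - (t : ℕ), by omega⟩ : Fin n) 1 : Fin n → ℂ))
      (α t • (Pi.single (⟨n - 1 - (t : ℕ), by omega⟩ : Fin n) 1 : Fin n → ℂ))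

lemma key1 (n k : ℕ) (hn : 0 < n) (hkn : k ≤ n) (α : Fin k → ℂ) (x : Fin k → Fin n → ℂ)
    (hx : ∀ (j : Fin k) (i : Fin n), n ≤ (i : ℕ) + (j : ℕ) → x j i = 0)
    (t j : Fin k) (htj : t < j) :
    (gaussFactor n k hn α x t).mulVec (x j) = x j := by
  unfold gaussFactor
  rw [add_mulVec, one_mulVec, add_eq_left]
  ext i
  simp only [mulVec, dotProduct, vecMulVec_apply, Pi.zero_apply, Pi.smul_apply, smul_eq_mul]
  apply Finset.sum_eq_zero
  intro a _
  rcases eq_or_ne a (⟨n - 1 - (t : ℕ), by omega⟩ : Fin n) with h | h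
  · have hz : x j a = 0 := hx j a (by rw [h]; simp; omega)
    simp [hz]
  · simp [Pi.single_apply, h]

lemma key2 (n k : ℕ) (hn : 0 < n) (hkn : k ≤ n) (α : Fin k → ℂ) (x : Fin k → Fin n → ℂ)
    (hx : ∀ (j : Fin k) (i : Fin n), n ≤ (i : ℕ) + (j : ℕ) → x j i = 0)
    (t j : Fin k) (htj : j < t) :
    Matrix.vecMul (α j • (Pi.single (⟨n - 1 - (j : ℕ), by omega⟩ : Fin n) 1 : Fin n → ℂ))
      (gaussFactor n k hn α x t)
      = α j • (Pi.single (⟨n - 1 - (j : ℕ), by omega⟩ : Fin n) 1 : Fin n → ℂ) := by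
  unfold gaussFactor
  rw [vecMul_add, vecMul_one, add_eq_left]
  ext i
  simp only [vecMul, dotProduct, vecMulVec_apply, Pi.zero_apply, Pi.smul_apply, smul_eq_mul]
  apply Finset.sum_eq_zero
  intro a _
  rcases eq_or_ne a (⟨n - 1 - (j : ℕ), by omega⟩ : Fin n) with h | h
  · have h1 : x t a = 0 := hx t a (by rw [h]; simp; omega)
    have h2 : (Pi.single (⟨n - 1 - (t : ℕ), by omega⟩ : Fin n) (1:ℂ) : Fin n → ℂ) a = 0 := by
      rw [Pi.single_apply, if_neg]
      intro hh
      rw [h] at hh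
      have := congrArg Fin.val hh
      simp at this
      omega
    simp [h1, h2]
  · simp [Pi.single_apply, h]

lemma prod1 (n k : ℕ) (hn : 0 < n) (hkn : k ≤ n) (α : Fin k → ℂ) (x : Fin k → Fin n → ℂ)
    (hx : ∀ (j : Fin k) (i : Fin n), n ≤ (i : ℕ) + (j : ℕ) → x j i = 0) (j : Fin k) :
    ∀ (L : List (Fin k)), (∀ t ∈ L, t < j) →
      ((L.map (gaussFactor n k hn α x)).prod).mulVec (x j) = x j := by
  intro L
  induction L with
  | nil => simp
  | cons a L ih =>
    intro hL
    rw [List.map_cons, List.prod_cons, ← mulVec_mulVec,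
      ih (fun t ht => hL t (List.mem_cons_of_mem a ht)),
      key1 n k hn hkn α x hx a j (hL a List.mem_cons_self)]

lemma prod2 (n k : ℕ) (hn : 0 < n) (hkn : k ≤ n) (α : Fin k → ℂ) (x : Fin k → Fin n → ℂ)
    (hx : ∀ (j : Fin k) (i : Fin n), n ≤ (i : ℕ) + (j : ℕ) → x j i = 0) (j : Fin k) :
    ∀ (L : List (Fin k)), (∀ t ∈ L, j < t) →
      Matrix.vecMul (α j • (Pi.single (⟨n - 1 - (j : ℕ), by clear hkn; omega⟩ : Fin n) 1 : Fin n → ℂ))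
        ((L.map (gaussFactor n k hn α x)).prod)
      = α j • (Pi.single (⟨n - 1 - (j : ℕ), by clear hkn; omega⟩ : Fin n) 1 : Fin n → ℂ) := by
  intro L
  induction L with
  | nil => simp
  | cons a L ih =>
    intro hL
    rw [List.map_cons, List.prod_cons, ← vecMul_vecMul,
      key2 n k hn hkn α x hx a j (hL a List.mem_cons_self),
      ih (fun t ht => hL t (List.mem_cons_of_mem a ht))]

/-- For the Gaussian factorization: `R₁ ⋯ R_{j−1} x_j = x_j` and
`y_jᵀ R_{j+1} ⋯ R_k = y_jᵀ`. -/
theorem gauss_factors_fixed_vectors (n k : ℕ) (hk : 1 ≤ k) (hkn : k ≤ n)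
    (α : Fin k → ℂ) (x : Fin k → Fin n → ℂ)
    (hx : ∀ (j : Fin k) (i : Fin n), n ≤ (i : ℕ) + (j : ℕ) → x j i = 0) :
    ∀ j : Fin k,
      ((((List.finRange k).take (j : ℕ)).map
          (gaussFactor n k (by omega) α x)).prod).mulVec (x j) = x j ∧
      Matrix.vecMul (α j • (Pi.single (⟨n - 1 - (j : ℕ), by omega⟩ : Fin n) 1 : Fin n → ℂ))
          ((((List.finRange k).drop ((j : ℕ) + 1)).map
            (gaussFactor n k (by omega) α x)).prod)
        = α j • (Pi.single (⟨n - 1 - (j : ℕ), by omega⟩ : Fin n) 1 : Fin n → ℂ) := by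
  intro j
  constructor
  · apply prod1 n k _ hkn α x hx j
    intro t ht
    obtain ⟨i, hi, he⟩ := List.mem_iff_getElem.mp ht
    rw [List.getElem_take, List.getElem_finRange] at he
    subst he
    simp only [List.length_take, List.length_finRange, lt_min_iff] at hi
    simpa [Fin.lt_def] using hi.1
  · apply prod2 n k _ hkn α x hx j
    intro t ht
    obtain ⟨i, hi, he⟩ := List.mem_iff_getElem.mp ht
    rw [List.getElem_drop, List.getElem_finRange] at he
    subst he
    simp [Fin.lt_def]
    omega
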